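/- Let p be a prime, D cyclic of order p^n, E ≤ Aut(D) a p'-subgroup, G = D ⋊ E, and let i, j ∈ {0,...,n} with α ∈ Aut(D_i), β ∈ Aut(D_j). Then the twisted diagonal subgroups Δ(D_i,α,D_i) and Δ(D_j,β,D_j) of G×G are conjugate in G×G if and only if i = j and there exists ρ ∈ E with α = β ∘ ρ|_{D_i}. -/

import Mathlib

open Subgroup SemidirectProduct


theorem myCyclicEq {D : Type*} [Group D] [Fintype D] [IsCyclic D]
    {H K : Subgroup D} (h : Nat.card H = Nat.card K) : H = K := by
  classical
  have hcomm : ∀ a b : D, a * b = b * a := fun a b =>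
    (IsCyclic.commGroup (α := D)).mul_comm a b
  set d := Nat.card H with hd
  have key : ∀ L : Subgroup D, Nat.card L = d → ∀ x ∈ L, x ^ d = 1 := by
    intro L hL x hx
    have h1 : (⟨x, hx⟩ : L) ^ d = 1 := by rw [← hL]; exact pow_card_eq_one'
    have h2 := congrArg (Subtype.val) h1
    simpa using h2
  let S : Subgroup D :=
    { carrier := {x : D | x ^ d = 1}
      one_mem' := one_pow d
      mul_mem' := fun {a b} ha hb => by
        have hab : (a * b) ^ d = a ^ d * b ^ d := Commute.mul_pow (hcomm a b) d
        simp only [Set.mem_setOf_eq] at *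
        rw [hab, ha, hb, one_mul]
      inv_mem' := fun {a} ha => by
        simp only [Set.mem_setOf_eq] at *
        rw [inv_pow, ha, inv_one] }
  have hdpos : 0 < d := Nat.card_pos
  have hcardS : Nat.card S ≤ d := by
    have h2 := IsCyclic.card_pow_eq_one_le (α := D) hdpos
    have h3 : Nat.card S = (Finset.filter (fun a : D => a ^ d = 1) Finset.univ).card := by
      rw [Nat.card_eq_fintype_card]
      convert Fintype.card_subtype (fun a : D => a ^ d = 1) using 2
      rfl
    omega
  have hH : H = S := Subgroup.eq_of_le_of_card_ge (fun x hx => key H rfl x hx)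
    (le_trans hcardS hd.ge)
  have hK : K = S := Subgroup.eq_of_le_of_card_ge (fun x hx => key K h.symm x hx)
    (le_trans hcardS (h ▸ hd.ge))
  rw [hH, hK]

theorem myMapCard {D : Type*} [Group D] (ρ : MulAut D) (H : Subgroup D) :
    Nat.card (H.map ρ.toMonoidHom) = Nat.card H :=
  (Nat.card_congr (Subgroup.equivMapOfInjective H ρ.toMonoidHom ρ.injective).toEquiv).symm

theorem myMapEq {D : Type*} [Group D] [Fintype D] [IsCyclic D] (ρ : MulAut D)
    {H K : Subgroup D} (h : Nat.card H = Nat.card K) : H.map ρ.toMonoidHom = K :=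
  myCyclicEq ((myMapCard ρ H).trans h)

/-- Let `p` be prime, `D` cyclic of order `p^n`, `E ≤ Aut(D)` a
`p'`-subgroup, `G = D ⋊ E`, `i, j ∈ {0,…,n}`, `α ∈ Aut(D_i)`, `β ∈ Aut(D_j)`.  The
twisted diagonal subgroups `Δ(D_i,α,D_i)` and `Δ(D_j,β,D_j)` of `G×G` are conjugate in
`G×G` iff `i = j` and `α = β ∘ ρ|_{D_i}` for some `ρ ∈ E`. -/
theorem stmt14 (p n : ℕ) (hp : p.Prime)
    (D : Type*) [Group D] [IsCyclic D] [Fintype D] (hD : Fintype.card D = p ^ n)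
    (E : Subgroup (MulAut D)) (hE : Nat.Coprime (Nat.card E) p)
    (i j : ℕ) (hin : i ≤ n) (hjn : j ≤ n)
    (Di Dj : Subgroup D) (hDi : Nat.card Di = p ^ i) (hDj : Nat.card Dj = p ^ j)
    (α : Di ≃* Di) (β : Dj ≃* Dj) :
    (∃ z : (D ⋊[E.subtype] E) × (D ⋊[E.subtype] E),
      (fun w => z * w * z⁻¹) ''
          {w : (D ⋊[E.subtype] E) × (D ⋊[E.subtype] E) |
            ∃ x : Di, w = (SemidirectProduct.inl ((α x : Di) : D),
                           SemidirectProduct.inl ((x : Di) : D))} =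
        {w : (D ⋊[E.subtype] E) × (D ⋊[E.subtype] E) |
            ∃ x : Dj, w = (SemidirectProduct.inl ((β x : Dj) : D),
                           SemidirectProduct.inl ((x : Dj) : D))}) ↔
    (i = j ∧ ∃ ρ : MulAut D, ρ ∈ E ∧
      ∀ (x : D) (hx : x ∈ Di) (hx' : ρ x ∈ Dj),
        ((α ⟨x, hx⟩ : Di) : D) = ((β ⟨ρ x, hx'⟩ : Dj) : D)) := by
  have hcomm : ∀ a b : D, a * b = b * a := fun a b =>
    (IsCyclic.commGroup (α := D)).mul_comm a b
  -- conjugation of inl-elements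
  have conj : ∀ (g : D ⋊[E.subtype] E) (a : D),
      g * SemidirectProduct.inl a * g⁻¹
        = SemidirectProduct.inl ((E.subtype g.right) a) := by
    intro g a
    ext
    · simp only [mul_left, mul_right, inv_left, inv_right, left_inl, right_inl, mul_one,
        map_inv, MulAut.inv_def, MulEquiv.apply_symm_apply]
      rw [hcomm g.left, mul_assoc]
      simp
    · simp [mul_right, right_inl, inv_right]
  constructor
  · rintro ⟨z, hz⟩
    set ρ1 : MulAut D := E.subtype z.1.right with hρ1
    set ρ2 : MulAut D := E.subtype z.2.right with hρ2
    -- direction 1: for each x : Di, exists y : Dj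
    have dir1 : ∀ x : Di, ∃ y : Dj,
        ρ1 ((α x : Di) : D) = ((β y : Dj) : D) ∧ ρ2 ((x : Di) : D) = ((y : Dj) : D) := by
      intro x
      have hmem : (z.1 * SemidirectProduct.inl ((α x : Di) : D) * z.1⁻¹,
          z.2 * SemidirectProduct.inl ((x : Di) : D) * z.2⁻¹) ∈
          {w : (D ⋊[E.subtype] E) × (D ⋊[E.subtype] E) |
            ∃ x : Dj, w = (SemidirectProduct.inl ((β x : Dj) : D),
                           SemidirectProduct.inl ((x : Dj) : D))} := by
        rw [← hz]
        exact ⟨_, ⟨x, rfl⟩, rfl⟩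
      obtain ⟨y, hy⟩ := hmem
      rw [conj, conj] at hy
      refine ⟨y, ?_, ?_⟩
      · exact inl_injective (congrArg Prod.fst hy)
      · exact inl_injective (congrArg Prod.snd hy)
    have dir2 : ∀ y : Dj, ∃ x : Di, ρ2 ((x : Di) : D) = ((y : Dj) : D) := by
      intro y
      have hmem : (SemidirectProduct.inl ((β y : Dj) : D),
          SemidirectProduct.inl ((y : Dj) : D)) ∈
          (fun w => z * w * z⁻¹) ''
          {w : (D ⋊[E.subtype] E) × (D ⋊[E.subtype] E) |
            ∃ x : Di, w = (SemidirectProduct.inl ((α x : Di) : D),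
                           SemidirectProduct.inl ((x : Di) : D))} := by
        rw [hz]; exact ⟨y, rfl⟩
      obtain ⟨w, ⟨x, rfl⟩, hw⟩ := hmem
      refine ⟨x, ?_⟩
      have h2 : z.2 * SemidirectProduct.inl ((x : Di) : D) * z.2⁻¹
          = SemidirectProduct.inl ((y : Dj) : D) := congrArg Prod.snd hw
      rw [conj] at h2
      exact inl_injective h2
    -- map of Di under ρ2 is Dj
    have hmap : Di.map ρ2.toMonoidHom = Dj := by
      apply le_antisymm
      · rintro _ ⟨a, ha, rfl⟩
        obtain ⟨y, _, hy2⟩ := dir1 ⟨a, ha⟩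
        simpa [hy2] using y.2
      · intro a ha
        obtain ⟨x, hx⟩ := dir2 ⟨a, ha⟩
        exact ⟨x, x.2, hx⟩
    have hcard : (p : ℕ) ^ i = p ^ j := by
      rw [← hDi, ← hDj, ← hmap, myMapCard]
    have hij : i = j := Nat.pow_right_injective hp.two_le hcard
    refine ⟨hij, ρ1⁻¹ * ρ2, mul_mem (inv_mem z.1.right.2) z.2.right.2, ?_⟩
    intro x hx hx'
    obtain ⟨y, hy1, hy2⟩ := dir1 ⟨x, hx⟩
    -- restriction of ρ1⁻¹ to Dj
    have hmapinv : Dj.map (ρ1⁻¹ : MulAut D).toMonoidHom = Dj := myMapEq _ rfl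
    have hmapfwd : Dj.map (ρ1 : MulAut D).toMonoidHom = Dj := myMapEq _ rfl
    let r : Dj ≃* Dj :=
      { toFun := fun a => ⟨ρ1⁻¹ (a : D), by
          have h5 : ρ1⁻¹ (a : D) ∈ Dj.map (ρ1⁻¹ : MulAut D).toMonoidHom := ⟨a, a.2, rfl⟩
          rwa [hmapinv] at h5⟩
        invFun := fun a => ⟨ρ1 (a : D), by
          have h5 : ρ1 (a : D) ∈ Dj.map (ρ1 : MulAut D).toMonoidHom := ⟨a, a.2, rfl⟩
          rwa [hmapfwd] at h5⟩
        left_inv := fun a => by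
          ext; simp
        right_inv := fun a => by
          ext; simp
        map_mul' := fun a b => by
          ext; simp }
    obtain ⟨m, hm⟩ := MonoidHom.map_cyclic (r : Dj ≃* Dj).toMonoidHom
    have hm' : ∀ g : Dj, r g = g ^ m := hm
    have hcomm2 : ∀ a : Dj, r (β a) = β (r a) := by
      intro a
      rw [hm' (β a), hm' a, ← map_zpow]
    -- α x = ρ1⁻¹ (β y)
    have h1 : ((α ⟨x, hx⟩ : Di) : D) = ρ1⁻¹ ((β y : Dj) : D) := by
      rw [← hy1]; simp
    have h2 : ρ1⁻¹ ((β y : Dj) : D) = ((r (β y) : Dj) : D) := rfl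
    have h3 : ((r y : Dj) : D) = (ρ1⁻¹ * ρ2) x := by
      show (ρ1⁻¹ ((y : Dj) : D)) = _
      rw [← hy2]
      rfl
    have h4 : r y = ⟨(ρ1⁻¹ * ρ2) x, hx'⟩ := Subtype.ext h3
    rw [h1, h2, hcomm2, h4]
  · rintro ⟨hij, ρ, hρE, hcond⟩
    subst hij
    have hDij : Di = Dj := myCyclicEq (hDi.trans hDj.symm)
    have hmap : Di.map ρ.toMonoidHom = Dj := myMapEq _ (hDi.trans hDj.symm)
    have hmapinv : Dj.map (ρ⁻¹ : MulAut D).toMonoidHom = Di := myMapEq _ (hDj.trans hDi.symm)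
    refine ⟨(1, SemidirectProduct.inr ⟨ρ, hρE⟩), ?_⟩
    ext w
    constructor
    · rintro ⟨v, ⟨x, rfl⟩, rfl⟩
      have hmem : ρ ((x : Di) : D) ∈ Dj := by
        have h5 : ρ ((x : Di) : D) ∈ Di.map ρ.toMonoidHom := ⟨x, x.2, rfl⟩
        rwa [hmap] at h5
      refine ⟨⟨ρ ((x : Di) : D), hmem⟩, ?_⟩
      simp only [Prod.mk_mul_mk, Prod.inv_mk, one_mul, inv_one, mul_one, Prod.mk.injEq]
      constructor
      · congr 1
        exact hcond x x.2 hmem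
      · rw [conj]
        rfl
    · rintro ⟨y, rfl⟩
      have hmem : (ρ⁻¹ : MulAut D) ((y : Dj) : D) ∈ Di := by
        have h5 : (ρ⁻¹ : MulAut D) ((y : Dj) : D) ∈ Dj.map (ρ⁻¹ : MulAut D).toMonoidHom :=
          ⟨y, y.2, rfl⟩
        rwa [hmapinv] at h5
      refine ⟨(SemidirectProduct.inl ((α ⟨(ρ⁻¹ : MulAut D) ((y : Dj) : D), hmem⟩ : Di) : D),
        SemidirectProduct.inl (((ρ⁻¹ : MulAut D) ((y : Dj) : D)))),
        ⟨⟨(ρ⁻¹ : MulAut D) ((y : Dj) : D), hmem⟩, rfl⟩, ?_⟩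
      simp only [Prod.mk_mul_mk, Prod.inv_mk, one_mul, inv_one, mul_one, Prod.mk.injEq]
      have hyy : ρ ((ρ⁻¹ : MulAut D) ((y : Dj) : D)) = ((y : Dj) : D) := by simp
      have hmem' : ρ ((ρ⁻¹ : MulAut D) ((y : Dj) : D)) ∈ Dj := by rw [hyy]; exact y.2
      constructor
      · congr 1
        have h6 : (⟨ρ ((ρ⁻¹ : MulAut D) ((y : Dj) : D)), hmem'⟩ : Dj) = y := Subtype.ext hyy
        rw [hcond _ hmem hmem', h6]
      · rw [conj]
        show SemidirectProduct.inl (ρ _) = _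
        rw [hyy]
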